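/- Suppose P is symmetric, row-stochastic, and for every integer k ≥ 0 the diagonal entries of P^k are all equal. Let X_t = (Φ*)^t(I−J), r_t = Tr(X_t)/N, and let v ∈ ℝ^N be an eigenvector of P with Pv = λv and Σ_i v_i = 0. Then for every t ≥ 0, v is an eigenvector of X_t, i.e. X_t v = μ_t v for scalars μ_t satisfying μ₀ = 1 and the recursion μ_{t+1} = λ_q² μ_t + q² r_t (1 − λ²), where λ_q = (1−q) + qλ. -/

import Mathlib

open Matrix BigOperators Polynomial

/-- The map `Φ*(Y) = P_qᵀ Y P_q + q²(Ψ⁻(Pᵀ·Ψ(Y)) − Pᵀ Ψ⁻(Ψ(Y)) P)`,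
where `P_q = (1−q)I + qP`. -/
noncomputable def PhiStar {N : ℕ} (P : Matrix (Fin N) (Fin N) ℝ) (q : ℝ)
    (Y : Matrix (Fin N) (Fin N) ℝ) : Matrix (Fin N) (Fin N) ℝ :=
  ((1 - q) • (1 : Matrix (Fin N) (Fin N) ℝ) + q • P)ᵀ * Y *
      ((1 - q) • (1 : Matrix (Fin N) (Fin N) ℝ) + q • P)
    + q ^ 2 •
        (Matrix.diagonal (Pᵀ *ᵥ Matrix.diag Y)
          - Pᵀ * Matrix.diagonal (Matrix.diag Y) * P)

/-- For symmetric stochastic `P` whose powers have constant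
diagonals, every eigenvector `v` of `P` with `Pv = λv` and `∑ᵢ vᵢ = 0` is an
eigenvector of `X_t = (Φ*)ᵗ(I−J)`: `X_t v = μ_t v` with `μ₀ = 1` and
`μ_{t+1} = λ_q² μ_t + q² r_t (1 − λ²)`, `λ_q = (1−q) + qλ`, `r_t = Tr(X_t)/N`. -/
lemma aux_diag_const {N : ℕ} (P : Matrix (Fin N) (Fin N) ℝ)
    (hPdiag : ∀ k : ℕ, ∀ i j : Fin N, (P ^ k) i i = (P ^ k) j j)
    (p : Polynomial ℝ) (i j : Fin N) :
    (Polynomial.aeval P p) i i = (Polynomial.aeval P p) j j := by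
  induction p using Polynomial.induction_on' with
  | add f g hf hg => simp only [map_add, Matrix.add_apply, hf, hg]
  | monomial m a =>
    have h : Polynomial.aeval P (monomial m a) = a • P ^ m := by
      simp [Polynomial.aeval_monomial, Algebra.algebraMap_eq_smul_one, smul_mul_assoc]
    simp only [h, Matrix.smul_apply, smul_eq_mul, hPdiag m i j]

lemma aux_step {N : ℕ} (hN : 1 ≤ N) (P : Matrix (Fin N) (Fin N) ℝ)
    (hProw : ∀ i, ∑ j, P i j = 1) (hPsymm : Pᵀ = P)
    (hPdiag : ∀ k : ℕ, ∀ i j : Fin N, (P ^ k) i i = (P ^ k) j j)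
    (q : ℝ) (p : Polynomial ℝ) :
    PhiStar P q (Polynomial.aeval P p - Matrix.of (fun _ _ => (N : ℝ)⁻¹))
      = Polynomial.aeval P ((C (1 - q) + C q * X) ^ 2 * p
            + C (q ^ 2 *
                ((Polynomial.aeval P p - Matrix.of (fun _ _ => (N : ℝ)⁻¹)).trace / N))
              * (1 - X ^ 2))
          - Matrix.of (fun _ _ => (N : ℝ)⁻¹) := by
  have hNne : (N : ℝ) ≠ 0 := by positivity
  set J : Matrix (Fin N) (Fin N) ℝ := Matrix.of (fun _ _ => (N : ℝ)⁻¹) with hJdef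
  set A : Matrix (Fin N) (Fin N) ℝ := Polynomial.aeval P p with hAdef
  set c : ℝ := ((A - J).trace) / N with hcdef
  have hcol : ∀ j, ∑ i, P i j = 1 := by
    intro j
    have : ∑ i, P i j = ∑ i, Pᵀ j i := by simp [Matrix.transpose_apply]
    rw [this, hPsymm, hProw j]
  have hPJ : P * J = J := by
    ext i j
    simp [hJdef, Matrix.mul_apply, ← Finset.sum_mul, hProw i]
  have hJP : J * P = J := by
    ext i j
    simp [hJdef, Matrix.mul_apply, ← Finset.mul_sum, hcol j]
  have hMdiag : ∀ i, (A - J) i i = c := by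
    intro i
    have hall : ∀ j, (A - J) j j = (A - J) i i := by
      intro j
      simp [Matrix.sub_apply, hJdef, aux_diag_const P hPdiag p j i, hAdef]
    have htr : (A - J).trace = (N : ℝ) * (A - J) i i := by
      rw [Matrix.trace]
      calc ∑ j, (A - J).diag j = ∑ _j : Fin N, (A - J) i i := by
            apply Finset.sum_congr rfl; intro j _; exact hall j
        _ = (N : ℝ) * (A - J) i i := by
            simp [Finset.sum_const, mul_comm]
            ring
    rw [hcdef, htr, mul_div_cancel_left₀ _ hNne]
  have hdg : Matrix.diag (A - J) = fun _ => c := funext hMdiag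
  set Pq : Matrix (Fin N) (Fin N) ℝ := (1 - q) • 1 + q • P with hPqdef
  have hPqT : Pqᵀ = Pq := by
    simp [hPqdef, Matrix.transpose_add, Matrix.transpose_smul, Matrix.transpose_one, hPsymm]
  have hPqJ : Pq * J = J := by
    rw [hPqdef, add_mul, smul_mul_assoc, smul_mul_assoc, one_mul, hPJ, ← add_smul]
    norm_num
  have hJPq : J * Pq = J := by
    rw [hPqdef, mul_add, Matrix.mul_smul, Matrix.mul_smul, mul_one, hJP, ← add_smul]
    norm_num
  have haevalPq : Polynomial.aeval P (C (1 - q) + C q * X) = Pq := by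
    rw [map_add, _root_.map_mul, Polynomial.aeval_C, Polynomial.aeval_C, Polynomial.aeval_X,
      Algebra.algebraMap_eq_smul_one, Algebra.algebraMap_eq_smul_one, smul_mul_assoc, one_mul,
      hPqdef]
  have hPc : P *ᵥ (fun _ => c) = fun _ => c := by
    funext i
    simp [Matrix.mulVec, dotProduct, ← Finset.sum_mul, hProw i]
  have hdc : (Matrix.diagonal (fun _ : Fin N => c)) = c • (1 : Matrix (Fin N) (Fin N) ℝ) := by
    ext i j; by_cases h : i = j <;> simp [Matrix.diagonal_apply, Matrix.one_apply, h]
  have h1 : Pqᵀ * (A - J) * Pq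
      = Polynomial.aeval P ((C (1 - q) + C q * X) ^ 2 * p) - J := by
    rw [hPqT, mul_sub, sub_mul, hPqJ, hJPq]
    congr 1
    have hpoly : (C (1 - q) + C q * X) ^ 2 * p
        = (C (1 - q) + C q * X) * p * (C (1 - q) + C q * X) := by ring
    rw [hpoly, _root_.map_mul, _root_.map_mul, haevalPq, hAdef]
  have h2 : Matrix.diagonal (Pᵀ *ᵥ Matrix.diag (A - J)) = c • 1 := by
    rw [hdg, hPsymm, hPc, hdc]
  have h3 : Pᵀ * Matrix.diagonal (Matrix.diag (A - J)) * P = c • (P * P) := by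
    rw [hdg, hPsymm, hdc, Matrix.mul_smul, mul_one, smul_mul_assoc]
  have h4 : Polynomial.aeval P (C (q ^ 2 * c) * (1 - X ^ 2))
      = (q ^ 2) • (c • 1 - c • (P * P)) := by
    rw [_root_.map_mul, Polynomial.aeval_C, map_sub, _root_.map_one, map_pow, Polynomial.aeval_X,
      Algebra.algebraMap_eq_smul_one]
    rw [smul_mul_assoc, one_mul, sq P, ← smul_sub, ← smul_smul]
  show Pqᵀ * (A - J) * Pq + q ^ 2 • (Matrix.diagonal (Pᵀ *ᵥ Matrix.diag (A - J))
      - Pᵀ * Matrix.diagonal (Matrix.diag (A - J)) * P) = _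
  rw [h1, h2, h3, map_add, ← h4]
  abel

lemma aux_mulVec {N : ℕ} (P : Matrix (Fin N) (Fin N) ℝ) (v : Fin N → ℝ) (lam : ℝ)
    (hvev : P *ᵥ v = lam • v) (p : Polynomial ℝ) :
    (Polynomial.aeval P p) *ᵥ v = Polynomial.eval lam p • v := by
  have hpow : ∀ m : ℕ, (P ^ m) *ᵥ v = lam ^ m • v := by
    intro m
    induction m with
    | zero => simp
    | succ m ih =>
      rw [pow_succ', ← Matrix.mulVec_mulVec, ih, Matrix.mulVec_smul, hvev,
        pow_succ', mul_smul, smul_comm lam (lam ^ m)]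
  induction p using Polynomial.induction_on' with
  | add f g hf hg => simp [map_add, Matrix.add_mulVec, hf, hg, add_smul]
  | monomial m a =>
    have h : Polynomial.aeval P (Polynomial.monomial m a) = a • P ^ m := by
      simp [Polynomial.aeval_monomial, Algebra.algebraMap_eq_smul_one, smul_mul_assoc]
    rw [h, Matrix.smul_mulVec, hpow, Polynomial.eval_monomial, mul_smul]

noncomputable def pseq (N : ℕ) (P : Matrix (Fin N) (Fin N) ℝ) (q : ℝ) : ℕ → Polynomial ℝ
  | 0 => 1
  | t + 1 =>
      (Polynomial.C (1 - q) + Polynomial.C q * Polynomial.X) ^ 2 * pseq N P q t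
        + Polynomial.C (q ^ 2 *
              ((Polynomial.aeval P (pseq N P q t)
                - Matrix.of (fun _ _ => (N : ℝ)⁻¹)).trace / N))
          * (1 - Polynomial.X ^ 2)

theorem stmt18 (N : ℕ) (hN : 1 ≤ N) (P : Matrix (Fin N) (Fin N) ℝ)
    (hPnonneg : ∀ i j, 0 ≤ P i j) (hProw : ∀ i, ∑ j, P i j = 1)
    (hPsymm : Pᵀ = P)
    (hPdiag : ∀ k : ℕ, ∀ i j : Fin N, (P ^ k) i i = (P ^ k) j j)
    (q : ℝ) (hq0 : 0 ≤ q) (hq1 : q ≤ 1)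
    (v : Fin N → ℝ) (hv0 : v ≠ 0) (lam : ℝ)
    (hvev : P *ᵥ v = lam • v) (hvsum : ∑ i, v i = 0) :
    ∃ mu : ℕ → ℝ, mu 0 = 1 ∧
      (∀ t : ℕ,
        ((PhiStar P q)^[t]
            ((1 : Matrix (Fin N) (Fin N) ℝ) - Matrix.of fun _ _ => (N : ℝ)⁻¹)) *ᵥ v
          = mu t • v) ∧
      (∀ t : ℕ,
        mu (t + 1)
          = ((1 - q) + q * lam) ^ 2 * mu t
            + q ^ 2 *
                (((PhiStar P q)^[t]
                  ((1 : Matrix (Fin N) (Fin N) ℝ) - Matrix.of fun _ _ => (N : ℝ)⁻¹)).trace / N) *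
                (1 - lam ^ 2)) := by
  set J : Matrix (Fin N) (Fin N) ℝ := Matrix.of (fun _ _ => (N : ℝ)⁻¹) with hJdef
  have key : ∀ t : ℕ,
      (PhiStar P q)^[t] ((1 : Matrix (Fin N) (Fin N) ℝ) - J)
        = Polynomial.aeval P (pseq N P q t) - J := by
    intro t
    induction t with
    | zero => simp [pseq]
    | succ t ih =>
      rw [Function.iterate_succ_apply', ih,
        aux_step hN P hProw hPsymm hPdiag q (pseq N P q t)]
      rfl
  have hJv : J *ᵥ v = 0 := by
    funext i
    simp [hJdef, Matrix.mulVec, dotProduct, ← Finset.mul_sum, hvsum]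
  refine ⟨fun t => Polynomial.eval lam (pseq N P q t), by simp [pseq], ?_, ?_⟩
  · intro t
    rw [key t, Matrix.sub_mulVec, aux_mulVec P v lam hvev, hJv, sub_zero]
  · intro t
    rw [key t]
    show Polynomial.eval lam (pseq N P q (t + 1)) = _
    simp only [pseq, Polynomial.eval_add, Polynomial.eval_mul, Polynomial.eval_pow,
      Polynomial.eval_C, Polynomial.eval_X, Polynomial.eval_one, Polynomial.eval_sub]
    rfl
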